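/- If a graph G has a crown decomposition, i.e., a partition of V(G) into an independent set I (nonempty), a head H containing all neighbors of I, and remainder R, such that G[I ∪ H] contains a matching of size |H|, then there exists a minimum vertex cover of G containing all vertices of H and no vertices of I. -/

import Mathlib

open SimpleGraph

/-- **Crown decomposition lemma.** If a finite graph `G` has a crown decomposition
`(I, H, R)` — `I` a nonempty independent set, `H` containing all neighbors of `I`,
and `G[I ∪ H]` containing a matching of size `|H|` — then there is a minimum vertex
cover of `G` containing all of `H` and avoiding `I`. -/
theorem crown_decomposition {V : Type} [Fintype V] [DecidableEq V] (G : SimpleGraph V)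
    (I H R : Finset V)
    (hpart : I ∪ H ∪ R = Finset.univ)
    (hIH : Disjoint I H) (hIR : Disjoint I R) (hHR : Disjoint H R)
    (hIne : I.Nonempty)
    (hInd : ∀ u ∈ I, ∀ v ∈ I, ¬ G.Adj u v)
    (hNI : ∀ u ∈ I, ∀ v : V, G.Adj u v → v ∈ H)
    (hM : ∃ M : Finset (V × V), M.card = H.card ∧
      (∀ e ∈ M, G.Adj e.1 e.2 ∧ e.1 ∈ I ∪ H ∧ e.2 ∈ I ∪ H) ∧
      (∀ e ∈ M, ∀ e' ∈ M, e ≠ e' →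
        e.1 ≠ e'.1 ∧ e.1 ≠ e'.2 ∧ e.2 ≠ e'.1 ∧ e.2 ≠ e'.2)) :
    ∃ C : Finset V, (∀ u v : V, G.Adj u v → u ∈ C ∨ v ∈ C) ∧
      (∀ C' : Finset V, (∀ u v : V, G.Adj u v → u ∈ C' ∨ v ∈ C') → C.card ≤ C'.card) ∧
      H ⊆ C ∧ Disjoint C I := by
  classical
  obtain ⟨M, hMcard, hMadj, hMdisj⟩ := hM
  -- key: any cover contains at least |H| vertices of I ∪ H
  have key : ∀ C' : Finset V, (∀ u v : V, G.Adj u v → u ∈ C' ∨ v ∈ C') →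
      H.card ≤ (C' ∩ (I ∪ H)).card := by
    intro C' hC'
    rw [← hMcard]
    apply Finset.card_le_card_of_injOn (fun e => if e.1 ∈ C' then e.1 else e.2)
    · intro e he
      obtain ⟨hadj, h1, h2⟩ := hMadj e he
      by_cases h1c : e.1 ∈ C'
      · show (if e.1 ∈ C' then e.1 else e.2) ∈ C' ∩ (I ∪ H)
        rw [if_pos h1c]
        exact Finset.mem_inter.2 ⟨h1c, h1⟩
      · show (if e.1 ∈ C' then e.1 else e.2) ∈ C' ∩ (I ∪ H)
        rw [if_neg h1c]
        rcases hC' e.1 e.2 hadj with h | h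
        · exact absurd h h1c
        · exact Finset.mem_inter.2 ⟨h, h2⟩
    · intro e he e' he' hfe
      by_contra hne
      obtain ⟨a, b, c, d⟩ := hMdisj e he e' he' hne
      dsimp only at hfe
      split_ifs at hfe
      exacts [a hfe, b hfe, c hfe, d hfe]
  -- a minimum vertex cover Cmin
  obtain ⟨Cmin, hCmin_mem, hCmin_min⟩ :=
    Finset.exists_min_image
      (Finset.univ.filter (fun S : Finset V => ∀ u v, G.Adj u v → u ∈ S ∨ v ∈ S))
      Finset.card
      ⟨Finset.univ, by simp⟩
  have hCmin : ∀ u v : V, G.Adj u v → u ∈ Cmin ∨ v ∈ Cmin :=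
    (Finset.mem_filter.1 hCmin_mem).2
  have hCmin_le : ∀ C' : Finset V, (∀ u v : V, G.Adj u v → u ∈ C' ∨ v ∈ C') →
      Cmin.card ≤ C'.card := by
    intro C' hC'
    exact hCmin_min C' (Finset.mem_filter.2 ⟨Finset.mem_univ _, hC'⟩)
  refine ⟨H ∪ (Cmin \ (I ∪ H)), ?_, ?_, Finset.subset_union_left, ?_⟩
  · intro u v hadj
    by_cases hu : u ∈ I
    · exact Or.inr (Finset.mem_union_left _ (hNI u hu v hadj))
    by_cases hv : v ∈ I
    · exact Or.inl (Finset.mem_union_left _ (hNI v hv u hadj.symm))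
    rcases hCmin u v hadj with h | h
    · by_cases hH : u ∈ H
      · exact Or.inl (Finset.mem_union_left _ hH)
      · exact Or.inl (Finset.mem_union_right _ (Finset.mem_sdiff.2 ⟨h, by
          simp [hu, hH]⟩))
    · by_cases hH : v ∈ H
      · exact Or.inr (Finset.mem_union_left _ hH)
      · exact Or.inr (Finset.mem_union_right _ (Finset.mem_sdiff.2 ⟨h, by
          simp [hv, hH]⟩))
  · intro C' hC'
    have hdisj : Disjoint H (Cmin \ (I ∪ H)) := by
      apply Finset.disjoint_right.2
      intro a ha
      exact fun haH => (Finset.mem_sdiff.1 ha).2 (Finset.mem_union_right _ haH)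
    rw [Finset.card_union_of_disjoint hdisj]
    have h1 : H.card + (Cmin \ (I ∪ H)).card ≤
        (Cmin ∩ (I ∪ H)).card + (Cmin \ (I ∪ H)).card :=
      Nat.add_le_add_right (key Cmin hCmin) _
    have h2 : (Cmin ∩ (I ∪ H)).card + (Cmin \ (I ∪ H)).card = Cmin.card :=
      Finset.card_inter_add_card_sdiff _ _
    calc H.card + (Cmin \ (I ∪ H)).card ≤ Cmin.card := by omega
      _ ≤ C'.card := hCmin_le C' hC'
  · apply Finset.disjoint_left.2
    intro a ha haI
    rcases Finset.mem_union.1 ha with h | h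
    · exact Finset.disjoint_left.1 hIH haI h
    · exact (Finset.mem_sdiff.1 h).2 (Finset.mem_union_left _ haI)
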